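/- Fix λ > 0, d₁ > 0, d₂ > 0, a > 0, w_o > 0, a constant G₃ > 0, and angles θ_i, θ_r with sin θ_i > 0 and sin θ_r > 0. Let w₁ = λ d₁/(π w_o), define G₂(Σ) = (4π Σ sin θ_i / λ²) · g_LS with g_LS = 2π w_o²/(4π d₁²), and set S₁ = λ² d₂²/(π a² sin θ_r) and S₂ = π G₃ w₁² / (2 sin θ_i). Then: (i) for every Σ > 0, G₂(Σ) ≤ G₃ if and only if Σ ≤ S₂, with equality if and only if Σ = S₂; and (ii) S₁ ≤ S₂ if and only if G₃ ≥ 2 d₂² w_o² sin θ_i / (d₁² a² sin θ_r). -/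

import Mathlib

open Real

/-- Proposition 1, second boundary: with `G₂(Σ) = (4π Σ sin θi / λ²) g_LS` and the
saturation value `G₃`, one has `G₂(Σ) ≤ G₃` iff `Σ ≤ S₂ = π G₃ w₁²/(2 sin θi)` (equality
iff `Σ = S₂`), and `S₁ ≤ S₂` iff `G₃ ≥ 2 d₂² w_o² sin θi/(d₁² a² sin θr)`. -/
theorem boundary_S2 (lam d₁ d₂ a w_o G₃ θi θr : ℝ)
    (hlam : 0 < lam) (hd₁ : 0 < d₁) (hd₂ : 0 < d₂) (ha : 0 < a) (hwo : 0 < w_o)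
    (hG₃ : 0 < G₃) (hθi : 0 < Real.sin θi) (hθr : 0 < Real.sin θr)
    (w₁ g_LS S₁ S₂ : ℝ) (G₂ : ℝ → ℝ)
    (hw₁ : w₁ = lam * d₁ / (π * w_o))
    (hgLS : g_LS = 2 * π * w_o ^ 2 / (4 * π * d₁ ^ 2))
    (hG₂ : ∀ Sig, G₂ Sig = 4 * π * Sig * Real.sin θi / lam ^ 2 * g_LS)
    (hS₁ : S₁ = lam ^ 2 * d₂ ^ 2 / (π * a ^ 2 * Real.sin θr))
    (hS₂ : S₂ = π * G₃ * w₁ ^ 2 / (2 * Real.sin θi)) :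
    (∀ Sig : ℝ, 0 < Sig →
      (G₂ Sig ≤ G₃ ↔ Sig ≤ S₂) ∧ (G₂ Sig = G₃ ↔ Sig = S₂)) ∧
    (S₁ ≤ S₂ ↔ G₃ ≥ 2 * d₂ ^ 2 * w_o ^ 2 * Real.sin θi / (d₁ ^ 2 * a ^ 2 * Real.sin θr)) := by
  have hπ : 0 < π := Real.pi_pos
  set k : ℝ := 2 * π * Real.sin θi * w_o ^ 2 / (lam ^ 2 * d₁ ^ 2) with hk
  have hkpos : 0 < k := by positivity
  have hG₂' : ∀ Sig, G₂ Sig = Sig * k := by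
    intro Sig
    rw [hG₂, hgLS, hk]
    field_simp
  have hS₂' : S₂ = G₃ / k := by
    rw [hS₂, hw₁, hk]
    field_simp
  constructor
  · intro Sig _
    constructor
    · rw [hG₂', hS₂', le_div_iff₀ hkpos]
    · rw [hG₂', hS₂', eq_div_iff hkpos.ne']
  · have heq : lam ^ 2 * d₂ ^ 2 * (2 * π * Real.sin θi * w_o ^ 2 / (lam ^ 2 * d₁ ^ 2))
        = 2 * π * d₂ ^ 2 * Real.sin θi * w_o ^ 2 / d₁ ^ 2 := by
      field_simp
    rw [hS₁, hS₂', hk, ge_iff_le, div_le_div_iff₀ (by positivity) (by positivity), heq,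
      div_le_iff₀ (by positivity), div_le_iff₀ (by positivity)]
    constructor <;> intro h <;> nlinarith [mul_le_mul_of_nonneg_left h hπ.le]
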